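/- Let δ : [0,∞) → (0,∞) and suppose there exist constants M ≥ 1, ε ∈ (0, 1/8), and t₀ ≥ 2 such that for every t ≥ t₀ there exists u ∈ [t, t + M log t] with δ(u) > u^{−1/2 + ε}, and such that δ is 1-Lipschitz in the sense that |log δ(s) − log δ(u)| ≤ |s − u| for all s, u. Then the set S = { s : δ(s) > s^{−1/2 + ε/4} } has positive lower density, i.e., liminf_{T→∞} |S ∩ [0,T]|/T > 0. -/

import Mathlib

open Filter MeasureTheory

private noncomputable def seqT (t₀ K : ℝ) : ℕ → ℝ
  | 0 => t₀
  | n + 1 => seqT t₀ K n + K * Real.log (seqT t₀ K n)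

private lemma seqT_ge {t₀ K : ℝ} (ht₀ : 2 ≤ t₀) (hK : 0 ≤ K) :
    ∀ n, t₀ ≤ seqT t₀ K n := by
  intro n
  induction n with
  | zero => simp [seqT]
  | succ n ih =>
    have hlog : 0 ≤ Real.log (seqT t₀ K n) := Real.log_nonneg (by linarith)
    have : 0 ≤ K * Real.log (seqT t₀ K n) := mul_nonneg hK hlog
    simp only [seqT]; linarith

private lemma seqT_growth {t₀ K : ℝ} (ht₀ : 2 ≤ t₀) (hK : 1 ≤ K) :
    ∀ n, t₀ + n * Real.log 2 ≤ seqT t₀ K n := by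
  intro n
  induction n with
  | zero => simp [seqT]
  | succ n ih =>
    have hge := seqT_ge ht₀ (by linarith : (0:ℝ) ≤ K) n
    have hlog : Real.log 2 ≤ Real.log (seqT t₀ K n) :=
      Real.log_le_log two_pos (by linarith)
    have hlog2 : 0 < Real.log 2 := Real.log_pos one_lt_two
    have h1 : Real.log 2 ≤ K * Real.log (seqT t₀ K n) := by nlinarith
    simp only [seqT]
    push_cast
    linarith

set_option maxHeartbeats 2000000 in
theorem stmt12 (δ : ℝ → ℝ) (hpos : ∀ t : ℝ, 0 ≤ t → 0 < δ t)
    (M ε t₀ : ℝ) (hM : 1 ≤ M) (hε : ε ∈ Set.Ioo (0 : ℝ) (1 / 8)) (ht₀ : 2 ≤ t₀)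
    (hrec : ∀ t : ℝ, t₀ ≤ t →
      ∃ u ∈ Set.Icc t (t + M * Real.log t), u ^ (-(1/2 : ℝ) + ε) < δ u)
    (hlip : ∀ s : ℝ, 0 ≤ s → ∀ u : ℝ, 0 ≤ u →
      |Real.log (δ s) - Real.log (δ u)| ≤ |s - u|) :
    0 < Filter.liminf
      (fun T : ℝ =>
        (volume ({s : ℝ | s ^ (-(1/2 : ℝ) + ε / 4) < δ s} ∩ Set.Icc 0 T)).toReal / T)
      Filter.atTop := by
  obtain ⟨hε0, hε8⟩ := hε
  set A : Set ℝ := {s : ℝ | s ^ (-(1/2 : ℝ) + ε / 4) < δ s} with hAdef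
  set K : ℝ := M + 1 with hKdef
  have hK1 : 1 ≤ K := by rw [hKdef]; linarith
  have hK0 : 0 < K := by linarith
  set c : ℝ := ε / (2 * K) with hcdef
  have hc0 : 0 < c := by rw [hcdef]; positivity
  have hlog2 : 0 < Real.log 2 := Real.log_pos one_lt_two
  -- block lemma on closed intervals
  have block : ∀ t : ℝ, t₀ ≤ t →
      ENNReal.ofReal (ε / 2 * Real.log t) ≤ volume (A ∩ Set.Icc t (t + K * Real.log t)) := by
    intro t ht
    have ht2 : (2:ℝ) ≤ t := le_trans ht₀ ht
    have ht0 : (0:ℝ) < t := by linarith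
    have hlt : 0 < Real.log t := Real.log_pos (by linarith)
    obtain ⟨u, ⟨hu1, hu2⟩, hδu⟩ := hrec t ht
    have hu0 : (0:ℝ) < u := by linarith
    have hsub : Set.Icc u (u + ε / 2 * Real.log t) ⊆ A ∩ Set.Icc t (t + K * Real.log t) := by
      rintro s ⟨hs1, hs2⟩
      have hs0 : (0:ℝ) < s := by linarith
      have hlsu : Real.log u ≤ Real.log s := Real.log_le_log hu0 hs1
      have hltu : Real.log t ≤ Real.log u := Real.log_le_log ht0 hu1
      constructor
      · -- membership in A
        have h1 := hlip s hs0.le u hu0.le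
        have habs : |s - u| = s - u := abs_of_nonneg (by linarith)
        rw [habs] at h1
        have h1' := abs_le.mp h1
        have h2 : Real.log (δ u) - (s - u) ≤ Real.log (δ s) := by linarith [h1'.2]
        have h3 : (-(1/2 : ℝ) + ε) * Real.log u < Real.log (δ u) := by
          have := Real.log_lt_log (Real.rpow_pos_of_pos hu0 _) hδu
          rwa [Real.log_rpow hu0] at this
        have e1 : (-(1/2 : ℝ) + ε) * Real.log u - ε / 2 * Real.log t < Real.log (δ s) := by
          linarith
        have e2 : (-(1/2 : ℝ) + ε / 4) * Real.log s ≤ (-(1/2 : ℝ) + ε / 4) * Real.log u := by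
          nlinarith [mul_nonneg (by linarith : (0:ℝ) ≤ 1/2 - ε/4) (sub_nonneg.mpr hlsu)]
        have e3 : (-(1/2 : ℝ) + ε / 4) * Real.log u ≤
            (-(1/2 : ℝ) + ε) * Real.log u - ε / 2 * Real.log t := by
          nlinarith [mul_nonneg (by linarith : (0:ℝ) ≤ 3*ε/4) (sub_nonneg.mpr hltu),
            mul_nonneg (by linarith : (0:ℝ) ≤ ε/4) hlt.le]
        have h4 : (-(1/2 : ℝ) + ε / 4) * Real.log s < Real.log (δ s) := by linarith
        show s ^ (-(1/2 : ℝ) + ε / 4) < δ s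
        rw [Real.rpow_def_of_pos hs0, mul_comm]
        have h5 := Real.exp_lt_exp.mpr h4
        rwa [Real.exp_log (hpos s hs0.le)] at h5
      · refine ⟨by linarith, ?_⟩
        have : (0:ℝ) ≤ (1 - ε/2) * Real.log t :=
          mul_nonneg (by linarith) hlt.le
        rw [hKdef]; nlinarith
    calc ENNReal.ofReal (ε / 2 * Real.log t)
        = volume (Set.Icc u (u + ε / 2 * Real.log t)) := by
          rw [Real.volume_Icc]; congr 1; ring
      _ ≤ _ := measure_mono hsub
  -- block lemma on half-open intervals
  have blockIoc : ∀ t : ℝ, t₀ ≤ t →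
      ENNReal.ofReal (ε / 2 * Real.log t) ≤ volume (A ∩ Set.Ioc t (t + K * Real.log t)) := by
    intro t ht
    refine le_trans (block t ht) ?_
    have hsub : A ∩ Set.Icc t (t + K * Real.log t) ⊆
        (A ∩ Set.Ioc t (t + K * Real.log t)) ∪ {t} := by
      rintro s ⟨hsA, hs1, hs2⟩
      rcases eq_or_lt_of_le hs1 with h | h
      · right; simp [← h]
      · left; exact ⟨hsA, h, hs2⟩
    calc volume (A ∩ Set.Icc t (t + K * Real.log t))
        ≤ volume ((A ∩ Set.Ioc t (t + K * Real.log t)) ∪ {t}) := measure_mono hsub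
      _ ≤ volume (A ∩ Set.Ioc t (t + K * Real.log t)) + volume ({t} : Set ℝ) :=
          measure_union_le _ _
      _ = volume (A ∩ Set.Ioc t (t + K * Real.log t)) := by simp
  -- sequence facts
  have hseq_ge : ∀ n, t₀ ≤ seqT t₀ K n := seqT_ge ht₀ hK0.le
  have hseq_log : ∀ n, 0 ≤ Real.log (seqT t₀ K n) :=
    fun n => Real.log_nonneg (by linarith [hseq_ge n])
  have hstep : ∀ n, seqT t₀ K (n+1) = seqT t₀ K n + K * Real.log (seqT t₀ K n) :=
    fun n => by simp [seqT]
  have hseq_mono : ∀ n, seqT t₀ K n ≤ seqT t₀ K (n+1) := by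
    intro n; rw [hstep n]
    have := mul_nonneg hK0.le (hseq_log n); linarith
  have hub : ∀ T : ℝ, ∃ n, T < seqT t₀ K n := by
    intro T
    obtain ⟨n, hn⟩ := exists_nat_gt ((T - t₀) / Real.log 2)
    refine ⟨n, ?_⟩
    have h1 := seqT_growth ht₀ hK1 n
    have h2 : T - t₀ < n * Real.log 2 := by
      rw [div_lt_iff₀ hlog2] at hn; linarith
    linarith
  -- main induction on blocks
  have main : ∀ n, ENNReal.ofReal (c * (seqT t₀ K n - t₀)) ≤
      volume (A ∩ Set.Icc 0 (seqT t₀ K n)) := by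
    intro n
    induction n with
    | zero => simp [seqT]
    | succ n ih =>
      have h1 : A ∩ Set.Icc 0 (seqT t₀ K n) ⊆
          (A ∩ Set.Icc 0 (seqT t₀ K (n+1))) ∩ Set.Icc 0 (seqT t₀ K n) := by
        rintro x ⟨hxA, hx1, hx2⟩
        exact ⟨⟨hxA, hx1, hx2.trans (hseq_mono n)⟩, hx1, hx2⟩
      have h2 : A ∩ Set.Ioc (seqT t₀ K n) (seqT t₀ K (n+1)) ⊆
          (A ∩ Set.Icc 0 (seqT t₀ K (n+1))) \ Set.Icc 0 (seqT t₀ K n) := by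
        rintro x ⟨hxA, hx1, hx2⟩
        refine ⟨⟨hxA, by linarith [hseq_ge n], hx2⟩, ?_⟩
        intro hx; exact absurd hx.2 (not_le.mpr hx1)
      have key := measure_inter_add_diff (μ := volume)
        (A ∩ Set.Icc 0 (seqT t₀ K (n+1)))
        (measurableSet_Icc : MeasurableSet (Set.Icc (0:ℝ) (seqT t₀ K n)))
      have hIoc := blockIoc (seqT t₀ K n) (hseq_ge n)
      rw [← hstep n] at hIoc
      have hKne : K ≠ 0 := ne_of_gt hK0
      calc ENNReal.ofReal (c * (seqT t₀ K (n+1) - t₀))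
          = ENNReal.ofReal (c * (seqT t₀ K n - t₀) + ε / 2 * Real.log (seqT t₀ K n)) := by
            rw [hstep n]; congr 1; rw [hcdef]; field_simp; ring
        _ ≤ ENNReal.ofReal (c * (seqT t₀ K n - t₀)) +
            ENNReal.ofReal (ε / 2 * Real.log (seqT t₀ K n)) := ENNReal.ofReal_add_le
        _ ≤ volume ((A ∩ Set.Icc 0 (seqT t₀ K (n+1))) ∩ Set.Icc 0 (seqT t₀ K n)) +
            volume ((A ∩ Set.Icc 0 (seqT t₀ K (n+1))) \ Set.Icc 0 (seqT t₀ K n)) :=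
            add_le_add (ih.trans (measure_mono h1)) (hIoc.trans (measure_mono h2))
        _ = volume (A ∩ Set.Icc 0 (seqT t₀ K (n+1))) := key
  -- eventual lower bound on the density
  have hbound : ∀ᶠ T in atTop, (c / 2 : ℝ) ≤ (volume (A ∩ Set.Icc 0 T)).toReal / T := by
    have hlo := Real.isLittleO_log_id_atTop.def (by positivity : (0:ℝ) < 1/(4*K))
    filter_upwards [eventually_ge_atTop (max t₀ (4*t₀)), hlo] with T hT hT2
    have hTt₀ : t₀ ≤ T := le_trans (le_max_left _ _) hT
    have hT4 : 4*t₀ ≤ T := le_trans (le_max_right _ _) hT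
    have hT0 : 0 < T := by linarith
    have hex := hub T
    have hmlt : T < seqT t₀ K (Nat.find hex) := Nat.find_spec hex
    have hm0 : Nat.find hex ≠ 0 := by
      intro h; rw [h] at hmlt; simp only [seqT] at hmlt; linarith
    obtain ⟨n, hn⟩ := Nat.exists_eq_succ_of_ne_zero hm0
    have hnle : seqT t₀ K n ≤ T := not_lt.mp (Nat.find_min hex (by omega))
    rw [hn] at hmlt
    have hlogT : 0 < Real.log T := Real.log_pos (by linarith)
    have hlogmono : Real.log (seqT t₀ K n) ≤ Real.log T :=
      Real.log_le_log (by linarith [hseq_ge n]) hnle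
    have hKlog : K * Real.log T ≤ T/4 := by
      have h5 : |Real.log T| ≤ 1/(4*K) * |T| := by simpa using hT2
      rw [abs_of_pos hlogT, abs_of_pos hT0] at h5
      calc K * Real.log T ≤ K * (1/(4*K) * T) := by nlinarith
        _ = T/4 := by field_simp
    have hTn : T - T/4 ≤ seqT t₀ K n := by
      rw [hstep n] at hmlt
      have h6 : K * Real.log (seqT t₀ K n) ≤ K * Real.log T := by nlinarith
      nlinarith [hmlt, h6, hKlog]
    have hμ : c * (seqT t₀ K n - t₀) ≤ (volume (A ∩ Set.Icc 0 T)).toReal := by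
      have hfin : volume (A ∩ Set.Icc 0 T) ≠ ⊤ := by
        refine ne_top_of_le_ne_top ?_ (measure_mono Set.inter_subset_right)
        simp [Real.volume_Icc]
      rw [← ENNReal.ofReal_le_iff_le_toReal hfin]
      refine (main n).trans (measure_mono ?_)
      rintro x ⟨hxA, hx1, hx2⟩
      exact ⟨hxA, hx1, hx2.trans hnle⟩
    rw [le_div_iff₀ hT0]
    have h7 : T/2 ≤ seqT t₀ K n - t₀ := by linarith
    nlinarith
  -- conclude
  have hcb : IsCoboundedUnder (· ≥ ·) atTop
      (fun T : ℝ => (volume (A ∩ Set.Icc 0 T)).toReal / T) := by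
    refine isCoboundedUnder_ge_of_eventually_le atTop (x := 1) ?_
    filter_upwards [eventually_ge_atTop (1:ℝ)] with T hT
    have hT0 : (0:ℝ) < T := lt_of_lt_of_le one_pos hT
    rw [div_le_one hT0]
    have hle : volume (A ∩ Set.Icc 0 T) ≤ ENNReal.ofReal T := by
      refine (measure_mono Set.inter_subset_right).trans ?_
      rw [Real.volume_Icc]; simp
    calc (volume (A ∩ Set.Icc 0 T)).toReal ≤ (ENNReal.ofReal T).toReal :=
          ENNReal.toReal_mono (by simp) hle
      _ = T := ENNReal.toReal_ofReal hT0.le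
  calc (0:ℝ) < c/2 := by positivity
    _ ≤ _ := le_liminf_of_le hcb hbound
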